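/- Every graph of the form Θ_{1,p₁,...,p_r} with all pᵢ even positive integers lies in G*, i.e., any two distinct odd cycles of such a graph share at most one edge. -/

import Mathlib

open SimpleGraph

/-- Adjacency in the line graph `L(G)`: two distinct edges sharing an endpoint. -/
def lineAdj {V : Type*} (G : SimpleGraph V) (e f : G.edgeSet) : Prop :=
  e ≠ f ∧ ∃ x : V, x ∈ (e : Sym2 V) ∧ x ∈ (f : Sym2 V)

/-- `D` is an orientation of the (loopless) adjacency relation `Adj`:
every arc of `D` is an edge, and every edge gets at least one of its two arcs. -/
def IsOrientation {α : Type*} (Adj : α → α → Prop) (D : α → α → Prop) : Prop :=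
  (∀ a b, D a b → Adj a b) ∧ (∀ a b, Adj a b → D a b ∨ D b a)

/-- A digraph (relation) is kernel-perfect if every induced subdigraph has a kernel:
an independent set `S` such that every vertex outside `S` has an out-neighbor in `S`. -/
def KernelPerfect {α : Type*} (D : α → α → Prop) : Prop :=
  ∀ Z : Set α, ∃ S ⊆ Z, (∀ a ∈ S, ∀ b ∈ S, ¬ D a b) ∧
    ∀ z ∈ Z, z ∉ S → ∃ s ∈ S, D z s

/-- Out-degree of a vertex in a digraph given as a relation. -/
noncomputable def outDeg {α : Type*} (D : α → α → Prop) (a : α) : ℕ := {b | D a b}.ncard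

/-- Degree of a vertex. -/
noncomputable def deg {V : Type*} (G : SimpleGraph V) (v : V) : ℕ := (G.neighborSet v).ncard

/-- Maximum degree. -/
noncomputable def maxDeg {V : Type*} (G : SimpleGraph V) : ℕ := sSup (Set.range (deg G))

/-- `G` is `f`-edge-orientable: `L(G)` admits a kernel-perfect orientation with
`1 + d⁺(e) ≤ f e` for every edge `e`. -/
def EdgeOrientable {V : Type*} (G : SimpleGraph V) (f : G.edgeSet → ℕ) : Prop :=
  ∃ D : G.edgeSet → G.edgeSet → Prop,
    IsOrientation (lineAdj G) D ∧ KernelPerfect D ∧ ∀ e, outDeg D e + 1 ≤ f e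

open Classical in
/-- The function `f_{k,v}`: `deg v` on edges incident to `v`, and `k` elsewhere. -/
noncomputable def fkv {V : Type*} (G : SimpleGraph V) (k : ℕ) (v : V) (e : G.edgeSet) : ℕ :=
  if v ∈ (e : Sym2 V) then deg G v else k

/-- `G` is strongly `k`-edge-orientable. -/
def StronglyEdgeOrientable {V : Type*} (G : SimpleGraph V) (k : ℕ) : Prop :=
  ∀ v : V, EdgeOrientable G (fkv G k v)

/-- `G` is `f`-edge-choosable. -/
def FEdgeChoosable {V : Type*} (G : SimpleGraph V) (f : G.edgeSet → ℕ) : Prop :=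
  ∀ ℓ : G.edgeSet → Finset ℕ, (∀ e, f e ≤ (ℓ e).card) →
    ∃ φ : G.edgeSet → ℕ, (∀ e, φ e ∈ ℓ e) ∧
      ∀ e₁ e₂, lineAdj G e₁ e₂ → φ e₁ ≠ φ e₂

/-- `G ∈ G*`: any two distinct odd cycles share at most one edge. -/
def InGStar {V : Type*} (G : SimpleGraph V) : Prop :=
  ∀ (u w : V) (c₁ : G.Walk u u) (c₂ : G.Walk w w),
    c₁.IsCycle → c₂.IsCycle → Odd c₁.length → Odd c₂.length →
    {e | e ∈ c₁.edges} ≠ {e | e ∈ c₂.edges} →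
    ({e | e ∈ c₁.edges} ∩ {e | e ∈ c₂.edges}).ncard ≤ 1

/-- `G` is 2-connected: connected, and still connected after deleting any one vertex. -/
def TwoConn {V : Type*} (G : SimpleGraph V) : Prop :=
  G.Connected ∧ ∀ v : V, (G.induce {w | w ≠ v}).Connected

/-- A block of `G`: a maximal 2-connected subgraph. -/
def IsBlock {V : Type*} (G : SimpleGraph V) (B : G.Subgraph) : Prop :=
  TwoConn B.coe ∧ ∀ B' : G.Subgraph, TwoConn B'.coe → B ≤ B' → B = B'

/-- Vertex type of the theta graph with path lengths `l`: two hubs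
(`Sum.inl false`, `Sum.inl true`) plus the internal vertices of each path. -/
def ThetaVert (l : List ℕ) : Type := Bool ⊕ (Σ i : Fin l.length, Fin (l.get i - 1))

/-- The theta graph `Θ_{l₁,…,l_k}`: two hubs joined by internally disjoint paths,
the `i`-th of length `l i`. -/
def thetaGraph (l : List ℕ) : SimpleGraph (ThetaVert l) :=
  SimpleGraph.fromRel (fun a b =>
    match a, b with
    | Sum.inl false, Sum.inl true => 1 ∈ l
    | Sum.inl false, Sum.inr ⟨_, j⟩ => j.val = 0
    | Sum.inl true, Sum.inr ⟨i, j⟩ => j.val = l.get i - 2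
    | Sum.inr ⟨i, j⟩, Sum.inr ⟨i', j'⟩ => i.val = i'.val ∧ j'.val = j.val + 1
    | _, _ => False)

/-- `v` (outside `c`) touches `w ∈ c`: some `v,w`-path meets `c` only at `w`. -/
def Touches {V : Type*} (G : SimpleGraph V) {u : V} (c : G.Walk u u) (v w : V) : Prop :=
  w ∈ c.support ∧ ∃ p : G.Walk v w, p.IsPath ∧ ∀ x ∈ p.support, x ∈ c.support → x = w


section generic
open SimpleGraph Walk
variable {V : Type*} {G : SimpleGraph V}

lemma path_start_unique {a b y : V} {p : G.Walk b a} (hp : p.IsPath)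
    (h : s(b, y) ∈ p.edges) : ∀ z, s(b, z) ∈ p.edges → z = y := by
  cases p with
  | nil => simp at h
  | cons hadj r =>
    rename_i w
    have hy : y = w := by
      rcases List.mem_cons.mp (Walk.edges_cons _ _ ▸ h) with h' | h'
      · rcases Sym2.eq_iff.mp h' with ⟨-, h2⟩ | ⟨h1, h2⟩
        · exact h2
        · exact absurd h1 hadj.ne
      · exact absurd (r.fst_mem_support_of_mem_edges h')
          ((Walk.cons_isPath_iff _ _).mp hp).2
    subst hy
    intro z hz
    rcases List.mem_cons.mp (Walk.edges_cons _ _ ▸ hz) with h' | h'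
    · rcases Sym2.eq_iff.mp h' with ⟨-, h2⟩ | ⟨h1, h2⟩
      · exact h2
      · exact absurd h1 hadj.ne
    · exact absurd (r.fst_mem_support_of_mem_edges h')
        ((Walk.cons_isPath_iff _ _).mp hp).2

lemma cycle_two_nbrs {u v : V} {c : G.Walk u u} (hc : c.IsCycle) (hv : v ∈ c.support) :
    ∃ x y : V, x ≠ y ∧ s(v, x) ∈ c.edges ∧ s(v, y) ∈ c.edges ∧
      ∀ z, s(v, z) ∈ c.edges → z = x ∨ z = y := by
  classical
  have hmem : ∀ e, e ∈ (c.rotate v hv).edges ↔ e ∈ c.edges :=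
    fun e => (c.rotate_edges v hv).mem_iff
  suffices h : ∃ x y : V, x ≠ y ∧ s(v, x) ∈ (c.rotate v hv).edges ∧
      s(v, y) ∈ (c.rotate v hv).edges ∧
      ∀ z, s(v, z) ∈ (c.rotate v hv).edges → z = x ∨ z = y by
    obtain ⟨x, y, hxy, h1, h2, h3⟩ := h
    exact ⟨x, y, hxy, (hmem _).mp h1, (hmem _).mp h2,
      fun z hz => h3 z ((hmem _).mpr hz)⟩
  have hc' : (c.rotate v hv).IsCycle := hc.rotate hv
  generalize (c.rotate v hv) = c' at *
  cases c' with
  | nil => exact absurd rfl hc'.ne_nil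
  | cons hadj q =>
    rename_i w
    obtain ⟨hq, hne⟩ := (Walk.cons_isCycle_iff _ _).mp hc'
    have hqnil : ¬ q.reverse.Nil := by
      intro hnil
      have hql : q.length = 0 := by
        have := (Walk.nil_iff_length_eq).mp hnil
        simpa using this
      cases q with
      | nil => exact hadj.ne rfl
      | cons _ _ => simp at hql
    obtain ⟨y, hadj', q', hq'⟩ := Walk.not_nil_iff.mp hqnil
    have hyq : s(v, y) ∈ q.edges := by
      have : s(v, y) ∈ q.reverse.edges := by rw [hq']; simp
      rwa [Walk.edges_reverse, List.mem_reverse] at this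
    refine ⟨w, y, ?_, by rw [Walk.edges_cons]; exact List.mem_cons_self,
      by rw [Walk.edges_cons]; exact List.mem_cons_of_mem _ hyq, ?_⟩
    · rintro rfl; exact hne hyq
    · intro z hz
      rcases List.mem_cons.mp (Walk.edges_cons _ _ ▸ hz) with h' | h'
      · rcases Sym2.eq_iff.mp h' with ⟨-, h2⟩ | ⟨h1, h2⟩
        · exact Or.inl h2
        · exact absurd h1 hadj.ne
      · right
        have hz' : s(v, z) ∈ q.reverse.edges := by
          rwa [Walk.edges_reverse, List.mem_reverse]
        have hy' : s(v, y) ∈ q.reverse.edges := by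
          rwa [Walk.edges_reverse, List.mem_reverse]
        exact path_start_unique hq.reverse hy' z hz'
end generic


namespace ThetaAux

attribute [reducible] ThetaVert

variable {l : List ℕ}

def e0 (l : List ℕ) : Sym2 (ThetaVert l) := s(Sum.inl false, Sum.inl true)

def nbrL {i : Fin l.length} (j : Fin (l.get i - 1)) : ThetaVert l :=
  if h : j.val = 0 then Sum.inl false
  else Sum.inr ⟨i, ⟨j.val - 1, by have := j.isLt; omega⟩⟩

def nbrR {i : Fin l.length} (j : Fin (l.get i - 1)) : ThetaVert l :=
  if h : j.val + 1 < l.get i - 1 then Sum.inr ⟨i, ⟨j.val + 1, h⟩⟩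
  else Sum.inl true

lemma inr_eq_iff {i i' : Fin l.length} {j : Fin (l.get i - 1)} {j' : Fin (l.get i' - 1)} :
    (Sum.inr ⟨i, j⟩ : ThetaVert l) = Sum.inr ⟨i', j'⟩ ↔ i.val = i'.val ∧ j.val = j'.val := by
  constructor
  · intro h
    injection h with h
    cases h
    exact ⟨rfl, rfl⟩
  · rintro ⟨h1, h2⟩
    have : i = i' := Fin.ext h1
    subst this
    have : j = j' := Fin.ext h2
    subst this
    rfl

lemma nbrL_ne_nbrR {i : Fin l.length} (j : Fin (l.get i - 1)) : nbrL j ≠ nbrR j := by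
  have := j.isLt
  unfold nbrL nbrR
  split_ifs <;> intro h <;>
    first
      | exact Bool.noConfusion (Sum.inl.inj h)
      | exact Sum.inl_ne_inr h
      | exact Sum.inr_ne_inl h
      | (rw [inr_eq_iff] at h
         have h2 : j.val - 1 = j.val + 1 := h.2
         omega)

lemma adj_iv {i : Fin l.length} (j : Fin (l.get i - 1)) (w : ThetaVert l) :
    (thetaGraph l).Adj (Sum.inr ⟨i, j⟩) w ↔ w = nbrL j ∨ w = nbrR j := by
  have hjlt := j.isLt
  rcases w with (_|_) | ⟨i', j'⟩
  · -- w = inl false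
    simp only [thetaGraph, fromRel_adj]
    constructor
    · rintro ⟨hne, h | h⟩
      · exact h.elim
      · left; rw [nbrL, dif_pos h]
    · rintro (h | h) <;> [rw [nbrL] at h; rw [nbrR] at h] <;> split_ifs at h with hj <;>
        first
          | exact absurd h (fun hc => Bool.noConfusion (Sum.inl.inj hc))
          | exact absurd h (fun hc => Sum.inl_ne_inr hc)
          | exact ⟨fun hc => (nomatch hc), Or.inr hj⟩
          | exact ⟨fun hc => (nomatch hc), Or.inr (by omega)⟩
  · -- w = inl true
    simp only [thetaGraph, fromRel_adj]
    constructor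
    · rintro ⟨hne, h | h⟩
      · exact h.elim
      · right; rw [nbrR, dif_neg (by omega)]
    · rintro (h | h) <;> [rw [nbrL] at h; rw [nbrR] at h] <;> split_ifs at h with hj <;>
        first
          | exact absurd h (fun hc => Bool.noConfusion (Sum.inl.inj hc))
          | exact absurd h (fun hc => Sum.inl_ne_inr hc)
          | exact ⟨fun hc => (nomatch hc), Or.inr hj⟩
          | exact ⟨fun hc => (nomatch hc), Or.inr (by omega)⟩
  · -- w = inr
    have hj'lt := j'.isLt
    simp only [thetaGraph, fromRel_adj]
    constructor
    · rintro ⟨hne, ⟨hi, hj⟩ | ⟨hi, hj⟩⟩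
      · have hii : i = i' := Fin.ext hi
        subst hii
        right
        rw [nbrR, dif_pos (by omega : j.val + 1 < l.get i - 1), inr_eq_iff]
        exact ⟨rfl, hj⟩
      · have hii : i = i' := Fin.ext hi.symm
        subst hii
        left
        rw [nbrL, dif_neg (by omega : ¬ j.val = 0), inr_eq_iff]
        exact ⟨rfl, by
          show j'.val = j.val - 1
          omega⟩
    · rintro (h | h) <;> [rw [nbrL] at h; rw [nbrR] at h] <;> split_ifs at h with hj <;>
        first
          | exact absurd h (fun hc => Sum.inr_ne_inl hc)
          | (rw [inr_eq_iff] at h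
             obtain ⟨hi, hj'⟩ := h
             first
               | (have hj2 : j'.val = j.val - 1 := hj'
                  have hii : i' = i := Fin.ext (by omega)
                  subst hii
                  exact ⟨fun hcon => by rw [inr_eq_iff] at hcon; have := hcon.2; omega,
                    Or.inr ⟨rfl, by omega⟩⟩)
               | (have hj2 : j'.val = j.val + 1 := hj'
                  have hii : i' = i := Fin.ext (by omega)
                  subst hii
                  exact ⟨fun hcon => by rw [inr_eq_iff] at hcon; have := hcon.2; omega,
                    Or.inl ⟨rfl, by omega⟩⟩))


def chi : ThetaVert l → ZMod 2 := fun v =>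
  match v with
  | Sum.inl _ => 0
  | Sum.inr p => ((p.2.val + 1 : ℕ) : ZMod 2)

@[simp] lemma chi_inl (b : Bool) : chi (Sum.inl b : ThetaVert l) = 0 := rfl
@[simp] lemma chi_inr (p) : chi (Sum.inr p : ThetaVert l) = ((p.2.val + 1 : ℕ) : ZMod 2) := rfl

instance : DecidableEq (ThetaVert l) := fun a b => by
  unfold ThetaVert
  infer_instance

def wt (l : List ℕ) (e : Sym2 (ThetaVert l)) : ZMod 2 :=
  if e = e0 l then 0 else 1

lemma cast_odd {n : ℕ} (h : n % 2 = 1) : ((n : ℕ) : ZMod 2) = 1 := by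
  have h20 : (2 : ZMod 2) = 0 := by decide
  rw [show n = 2 * (n / 2) + 1 by omega]
  push_cast
  linear_combination ((n / 2 : ℕ) : ZMod 2) * h20

lemma not_e0_inr {i : Fin l.length} {j : Fin (l.get i - 1)} {w : ThetaVert l} :
    s(Sum.inr ⟨i, j⟩, w) ≠ e0 l := by
  intro hc
  rcases Sym2.eq_iff.mp hc with ⟨h1, -⟩ | ⟨h2, -⟩
  · exact (nomatch h1)
  · exact (nomatch h2)

lemma wt_ft : wt l s((Sum.inl false : ThetaVert l), Sum.inl true) = 0 := if_pos rfl

lemma wt_tf : wt l s((Sum.inl true : ThetaVert l), Sum.inl false) = 0 := by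
  rw [Sym2.eq_swap]; exact if_pos rfl

lemma wt_inr {i : Fin l.length} {j : Fin (l.get i - 1)} {w : ThetaVert l} :
    wt l s(Sum.inr ⟨i, j⟩, w) = 1 := if_neg not_e0_inr

lemma wt_inr' {i : Fin l.length} {j : Fin (l.get i - 1)} {w : ThetaVert l} :
    wt l s(w, Sum.inr ⟨i, j⟩) = 1 := by
  rw [Sym2.eq_swap]; exact if_neg not_e0_inr

lemma wt_ne {e : Sym2 (ThetaVert l)} (h : e ≠ e0 l) : wt l e = 1 := if_neg h

lemma flip (hle : ∀ i : Fin l.length, 2 ≤ l.get i → Even (l.get i))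
    {a b : ThetaVert l} (h : (thetaGraph l).Adj a b) :
    chi a + wt l s(a, b) = chi b := by
  have h20 : (2 : ZMod 2) = 0 := by decide
  have hwt_swap : ∀ x y : ThetaVert l, wt l s(x, y) = wt l s(y, x) := by
    intro x y; rw [Sym2.eq_swap]
  rcases a with (_|_) | ⟨i, j⟩ <;> rcases b with (_|_) | ⟨i', j'⟩ <;>
      obtain ⟨hne, hr | hr⟩ := (by simpa only [thetaGraph, fromRel_adj] using h :
        _ ∧ (_ ∨ _)) <;>
      first
        | exact absurd rfl hne
        | exact hr.elim
        | skip
  · -- false true, e0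
    rw [wt_ft]; simp
  · -- false, inr : j = 0
    rw [wt_inr']
    simp only [chi_inl, chi_inr, hr]
    decide
  · -- true false
    rw [wt_tf]; simp
  · -- true, inr : j' = l.get i' - 2
    rw [wt_inr']
    have hlt := j'.isLt
    obtain ⟨m, hm⟩ := hle i' (by omega)
    simp only [chi_inl, chi_inr, zero_add]
    exact (cast_odd (by omega)).symm
  · -- inr, false : j = 0
    rw [wt_inr]
    simp only [chi_inl, chi_inr, hr]
    decide
  · -- inr, true : j = l.get i - 2
    rw [wt_inr]
    have hlt := j.isLt
    obtain ⟨m, hm⟩ := hle i (by omega)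
    simp only [chi_inl, chi_inr]
    rw [cast_odd (by omega)]
    exact h20
  · -- inr inr forward : j'.val = j.val + 1
    rw [wt_inr]
    obtain ⟨hi, hj⟩ := hr
    simp only [chi_inr]
    rw [hj]
    push_cast
    ring
  · -- inr inr backward : j.val = j'.val + 1
    rw [wt_inr]
    obtain ⟨hi, hj⟩ := hr
    simp only [chi_inr]
    rw [hj]
    push_cast
    linear_combination h20

lemma walk_parity (hle : ∀ i : Fin l.length, 2 ≤ l.get i → Even (l.get i))
    {a b : ThetaVert l} (p : (thetaGraph l).Walk a b) :
    chi a + (p.edges.map (wt l)).sum = chi b := by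
  induction p with
  | nil => simp
  | cons h q ih =>
    simp only [Walk.edges_cons, List.map_cons, List.sum_cons]
    rw [← ih, ← flip hle h]
    ring

lemma e0_mem_of_odd (hle : ∀ i : Fin l.length, 2 ≤ l.get i → Even (l.get i))
    {u : ThetaVert l} (c : (thetaGraph l).Walk u u) (hodd : Odd c.length) :
    e0 l ∈ c.edges := by
  by_contra hmem
  have hpar := walk_parity hle c
  have hsum : (c.edges.map (wt l)).sum = 0 := by
    have : chi u + (c.edges.map (wt l)).sum = chi u + 0 := by rw [hpar, add_zero]
    exact add_left_cancel this
  have hrep : c.edges.map (wt l) = List.replicate c.edges.length 1 := by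
    apply List.eq_replicate_iff.mpr
    refine ⟨by simp, ?_⟩
    intro x hx
    obtain ⟨e, he, rfl⟩ := List.mem_map.mp hx
    exact wt_ne (by rintro rfl; exact hmem he)
  rw [hrep, List.sum_replicate, nsmul_eq_mul, mul_one, Walk.length_edges] at hsum
  obtain ⟨m, hm⟩ := hodd
  rw [cast_odd (by omega)] at hsum
  exact absurd hsum (by decide)

lemma step {u : ThetaVert l} {c : (thetaGraph l).Walk u u} (hc : c.IsCycle)
    {i : Fin l.length} {j : Fin (l.get i - 1)}
    (hs : (Sum.inr ⟨i, j⟩ : ThetaVert l) ∈ c.support) :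
    s(Sum.inr ⟨i, j⟩, nbrL j) ∈ c.edges ∧ s(Sum.inr ⟨i, j⟩, nbrR j) ∈ c.edges := by
  obtain ⟨x, y, hxy, hx, hy, -⟩ := cycle_two_nbrs hc hs
  have hxadj : (thetaGraph l).Adj (Sum.inr ⟨i, j⟩) x :=
    (thetaGraph l).mem_edgeSet.mp (c.edges_subset_edgeSet hx)
  have hyadj : (thetaGraph l).Adj (Sum.inr ⟨i, j⟩) y :=
    (thetaGraph l).mem_edgeSet.mp (c.edges_subset_edgeSet hy)
  rcases (adj_iv j x).mp hxadj with rfl | rfl <;>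
    rcases (adj_iv j y).mp hyadj with rfl | rfl
  · exact absurd rfl hxy
  · exact ⟨hx, hy⟩
  · exact ⟨hy, hx⟩
  · exact absurd rfl hxy

lemma prop_support {u : ThetaVert l} {c : (thetaGraph l).Walk u u} (hc : c.IsCycle)
    {i : Fin l.length} (j0 : Fin (l.get i - 1))
    (hs : (Sum.inr ⟨i, j0⟩ : ThetaVert l) ∈ c.support) :
    ∀ (n : ℕ) (hn : n < l.get i - 1), (Sum.inr ⟨i, ⟨n, hn⟩⟩ : ThetaVert l) ∈ c.support := by
  have hj0 := j0.isLt
  have stepD : ∀ (n : ℕ) (hn' : n < l.get i - 1) (hn : n + 1 < l.get i - 1),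
      (Sum.inr ⟨i, ⟨n + 1, hn⟩⟩ : ThetaVert l) ∈ c.support →
      (Sum.inr ⟨i, ⟨n, hn'⟩⟩ : ThetaVert l) ∈ c.support := by
    intro n hn' hn hmem
    have hL := (step hc hmem).1
    have hval : nbrL (⟨n + 1, hn⟩ : Fin (l.get i - 1)) = Sum.inr ⟨i, ⟨n, hn'⟩⟩ := by
      rw [nbrL, dif_neg (show ¬ (⟨n + 1, hn⟩ : Fin (l.get i - 1)).val = 0 from
        Nat.succ_ne_zero n)]
      exact inr_eq_iff.mpr ⟨rfl, rfl⟩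
    rw [hval] at hL
    exact c.snd_mem_support_of_mem_edges hL
  have stepU : ∀ (n : ℕ) (hn : n < l.get i - 1) (hn' : n + 1 < l.get i - 1),
      (Sum.inr ⟨i, ⟨n, hn⟩⟩ : ThetaVert l) ∈ c.support →
      (Sum.inr ⟨i, ⟨n + 1, hn'⟩⟩ : ThetaVert l) ∈ c.support := by
    intro n hn hn' hmem
    have hR := (step hc hmem).2
    have hval : nbrR (⟨n, hn⟩ : Fin (l.get i - 1)) = Sum.inr ⟨i, ⟨n + 1, hn'⟩⟩ := by
      rw [nbrR, dif_pos (show (⟨n, hn⟩ : Fin (l.get i - 1)).val + 1 < l.get i - 1 from hn')]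
    rw [hval] at hR
    exact c.snd_mem_support_of_mem_edges hR
  have hltd : ∀ k : ℕ, j0.val - k < l.get i - 1 := fun k => by omega
  have down : ∀ k : ℕ, (Sum.inr ⟨i, ⟨j0.val - k, hltd k⟩⟩ : ThetaVert l) ∈ c.support := by
    intro k
    induction k with
    | zero =>
      have : (⟨j0.val - 0, hltd 0⟩ : Fin (l.get i - 1)) = j0 :=
        Fin.ext (show j0.val - 0 = j0.val by omega)
      rw [this]; exact hs
    | succ k ih =>
      by_cases hk : j0.val ≤ k
      · have : (⟨j0.val - (k + 1), hltd (k + 1)⟩ : Fin (l.get i - 1))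
            = ⟨j0.val - k, hltd k⟩ := Fin.ext (show j0.val - (k + 1) = j0.val - k by omega)
        rw [this]; exact ih
      · have heq : (⟨j0.val - k, hltd k⟩ : Fin (l.get i - 1))
            = ⟨(j0.val - (k + 1)) + 1, by omega⟩ :=
          Fin.ext (show j0.val - k = (j0.val - (k + 1)) + 1 by omega)
        rw [heq] at ih
        exact stepD _ _ _ ih
  have up : ∀ k : ℕ, ∀ (hg : j0.val + k < l.get i - 1),
      (Sum.inr ⟨i, ⟨j0.val + k, hg⟩⟩ : ThetaVert l) ∈ c.support := by
    intro k
    induction k with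
    | zero =>
      intro hg
      have : (⟨j0.val + 0, hg⟩ : Fin (l.get i - 1)) = j0 :=
        Fin.ext (show j0.val + 0 = j0.val by omega)
      rw [this]; exact hs
    | succ k ih =>
      intro hg
      have h1 : j0.val + k < l.get i - 1 := by omega
      have := stepU (j0.val + k) h1 (by omega) (ih h1)
      have heq : (⟨j0.val + k + 1, by omega⟩ : Fin (l.get i - 1))
          = ⟨j0.val + (k + 1), hg⟩ := Fin.ext (show j0.val + k + 1 = j0.val + (k + 1) by omega)
      rw [heq] at this
      exact this
  intro n hn
  by_cases hnj : n ≤ j0.val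
  · have heq : (⟨n, hn⟩ : Fin (l.get i - 1)) = ⟨j0.val - (j0.val - n), hltd _⟩ :=
      Fin.ext (show n = j0.val - (j0.val - n) by omega)
    rw [heq]; exact down _
  · have heq : (⟨n, hn⟩ : Fin (l.get i - 1)) = ⟨j0.val + (n - j0.val), by omega⟩ :=
      Fin.ext (show n = j0.val + (n - j0.val) by omega)
    rw [heq]; exact up _ _

lemma edge_cases' {a b : ThetaVert l} (h : (thetaGraph l).Adj a b) :
    s(a, b) = e0 l ∨ ∃ (i : Fin l.length) (j : Fin (l.get i - 1)) (w : ThetaVert l),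
      s(a, b) = s(Sum.inr ⟨i, j⟩, w) ∧ (thetaGraph l).Adj (Sum.inr ⟨i, j⟩) w := by
  rcases a with (_|_) | ⟨i, j⟩
  · rcases b with (_|_) | ⟨i, j⟩
    · obtain ⟨hne, hr | hr⟩ := (by simpa only [thetaGraph, fromRel_adj] using h :
        _ ∧ (_ ∨ _)) <;> first | exact absurd rfl hne | exact hr.elim
    · left; rfl
    · exact Or.inr ⟨i, j, Sum.inl false, Sym2.eq_swap, h.symm⟩
  · rcases b with (_|_) | ⟨i, j⟩
    · left; exact Sym2.eq_swap
    · obtain ⟨hne, hr | hr⟩ := (by simpa only [thetaGraph, fromRel_adj] using h :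
        _ ∧ (_ ∨ _)) <;> first | exact absurd rfl hne | exact hr.elim
    · exact Or.inr ⟨i, j, Sum.inl true, Sym2.eq_swap, h.symm⟩
  · exact Or.inr ⟨i, j, b, rfl, h⟩

lemma same_edges {u w : ThetaVert l} {c : (thetaGraph l).Walk u u}
    {c' : (thetaGraph l).Walk w w} (hc : c.IsCycle) (hc' : c'.IsCycle)
    (he : e0 l ∈ c.edges) (he' : e0 l ∈ c'.edges)
    {i : Fin l.length} {j0 : Fin (l.get i - 1)}
    (hs : (Sum.inr ⟨i, j0⟩ : ThetaVert l) ∈ c.support)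
    (hs' : (Sum.inr ⟨i, j0⟩ : ThetaVert l) ∈ c'.support) :
    ∀ g ∈ c.edges, g ∈ c'.edges := by
  intro g hg
  have hgE := c.edges_subset_edgeSet hg
  revert hg hgE
  induction g using Sym2.ind with
  | _ a b =>
    intro hg hgE
    have hadj : (thetaGraph l).Adj a b := (thetaGraph l).mem_edgeSet.mp hgE
    rcases edge_cases' hadj with hE | ⟨i', j', w', hrep, hadj'⟩
    · rw [hE]; exact he'
    · rw [hrep] at hg ⊢
      by_cases hii : i' = i
      · subst hii
        have hsup' : (Sum.inr ⟨i', j'⟩ : ThetaVert l) ∈ c'.support :=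
          prop_support hc' j0 hs' j'.val j'.isLt
        obtain ⟨hL, hR⟩ := step hc' hsup'
        rcases (adj_iv j' w').mp hadj' with rfl | rfl
        · exact hL
        · exact hR
      · exfalso
        have hsupc : (Sum.inr ⟨i', j'⟩ : ThetaVert l) ∈ c.support :=
          c.fst_mem_support_of_mem_edges hg
        have he₂ : s((Sum.inl false : ThetaVert l), Sum.inl true) ∈ c.edges := he
        have h0sup : (Sum.inl false : ThetaVert l) ∈ c.support :=
          c.fst_mem_support_of_mem_edges he₂
        have hz : (0 : ℕ) < l.get i - 1 := by have := j0.isLt; omega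
        have hz' : (0 : ℕ) < l.get i' - 1 := by have := j'.isLt; omega
        have m1 : (Sum.inr ⟨i, ⟨0, hz⟩⟩ : ThetaVert l) ∈ c.support :=
          prop_support hc j0 hs 0 hz
        have m1' : (Sum.inr ⟨i', ⟨0, hz'⟩⟩ : ThetaVert l) ∈ c.support :=
          prop_support hc j' hsupc 0 hz'
        have e1 : s((Sum.inl false : ThetaVert l), Sum.inr ⟨i, ⟨0, hz⟩⟩) ∈ c.edges := by
          have := (step hc m1).1
          rw [nbrL, dif_pos rfl] at this
          rwa [Sym2.eq_swap]
        have e1' : s((Sum.inl false : ThetaVert l), Sum.inr ⟨i', ⟨0, hz'⟩⟩) ∈ c.edges := by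
          have := (step hc m1').1
          rw [nbrL, dif_pos rfl] at this
          rwa [Sym2.eq_swap]
        obtain ⟨x, y, hxy, -, -, huniq⟩ := cycle_two_nbrs hc h0sup
        have nta : (Sum.inl true : ThetaVert l) ≠ Sum.inr ⟨i, ⟨0, hz⟩⟩ :=
          fun hh => (nomatch hh)
        have ntb : (Sum.inl true : ThetaVert l) ≠ Sum.inr ⟨i', ⟨0, hz'⟩⟩ :=
          fun hh => (nomatch hh)
        have nab : (Sum.inr ⟨i, ⟨0, hz⟩⟩ : ThetaVert l) ≠ Sum.inr ⟨i', ⟨0, hz'⟩⟩ :=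
          fun hh => hii (Fin.ext ((inr_eq_iff.mp hh).1)).symm
        have d1 := huniq _ he₂
        have d2 := huniq _ e1
        have d3 := huniq _ e1'
        rcases d1 with rfl | rfl
        · rcases d2 with h2 | h2
          · exact nta h2.symm
          · subst h2
            rcases d3 with h3 | h3
            · exact ntb h3.symm
            · exact nab h3.symm
        · rcases d2 with h2 | h2
          · rcases d3 with h3 | h3
            · subst h2
              exact nab h3.symm
            · exact ntb h3.symm
          · exact nta h2.symm


lemma edge_repr {g : Sym2 (ThetaVert l)} (hg : g ∈ (thetaGraph l).edgeSet)
    (hg0 : g ≠ e0 l) :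
    ∃ (i : Fin l.length) (j : Fin (l.get i - 1)) (w' : ThetaVert l),
      g = s(Sum.inr ⟨i, j⟩, w') := by
  obtain ⟨⟨a, b⟩, rfl⟩ := Quot.exists_rep g
  rcases edge_cases' ((thetaGraph l).mem_edgeSet.mp hg) with hE | ⟨i, j, w', hrep, -⟩
  · exact absurd hE hg0
  · exact ⟨i, j, w', hrep⟩

end ThetaAux

/-- every `Θ_{1,p₁,…,p_r}` with all `pᵢ` even positive lies in `G*`. -/
theorem stmt4 (ps : List ℕ) (hps : ∀ p ∈ ps, Even p ∧ 0 < p) :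
    InGStar (thetaGraph (1 :: ps)) := by
  intro u w c₁ c₂ hc₁ hc₂ ho₁ ho₂ hne
  have hle : ∀ i : Fin (1 :: ps).length, 2 ≤ (1 :: ps).get i → Even ((1 :: ps).get i) := by
    intro i hi
    rcases i with ⟨iv, hiv⟩
    cases iv with
    | zero => exact absurd hi (by norm_num [List.get])
    | succ n =>
      have hrw : (1 :: ps).get ⟨n + 1, hiv⟩ = ps.get ⟨n, by simpa using hiv⟩ := rfl
      rw [hrw]
      exact (hps _ (ps.get_mem _)).1
  have he₁ : ThetaAux.e0 (1 :: ps) ∈ c₁.edges := ThetaAux.e0_mem_of_odd hle c₁ ho₁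
  have he₂ : ThetaAux.e0 (1 :: ps) ∈ c₂.edges := ThetaAux.e0_mem_of_odd hle c₂ ho₂
  have hsub : {e | e ∈ c₁.edges} ∩ {e | e ∈ c₂.edges} ⊆ {ThetaAux.e0 (1 :: ps)} := by
    intro g hg
    obtain ⟨hg₁, hg₂⟩ := hg
    simp only [Set.mem_setOf_eq] at hg₁ hg₂
    by_contra hg0
    have hg0' : g ≠ ThetaAux.e0 (1 :: ps) := by simpa using hg0
    exfalso
    apply hne
    have hgE := c₁.edges_subset_edgeSet hg₁
    obtain ⟨i, j, w', hrep⟩ := ThetaAux.edge_repr hgE hg0'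
    rw [hrep] at hg₁ hg₂
    have hs₁ := c₁.fst_mem_support_of_mem_edges hg₁
    have hs₂ := c₂.fst_mem_support_of_mem_edges hg₂
    ext g'
    simp only [Set.mem_setOf_eq]
    exact ⟨fun h => ThetaAux.same_edges hc₁ hc₂ he₁ he₂ hs₁ hs₂ g' h,
           fun h => ThetaAux.same_edges hc₂ hc₁ he₂ he₁ hs₂ hs₁ g' h⟩
  calc ({e | e ∈ c₁.edges} ∩ {e | e ∈ c₂.edges}).ncard
      ≤ ({ThetaAux.e0 (1 :: ps)} : Set _).ncard :=
        Set.ncard_le_ncard hsub (Set.finite_singleton _)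
    _ = 1 := Set.ncard_singleton _
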